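/- Let p ≥ 1 be an integer and let G be a finite rooted tree (a rooted forest with exactly one root) with n ≥ 1 vertices. Then at least one of the following holds: the number of leaves of G is at least n/(6p), or the number of vertices in longpaths(G, p) is at least n/3. -/

import Mathlib

open Function

/-- A finite rooted forest: for every vertex, iterating the parent function
eventually stabilizes (reaches a root, i.e. a fixed point of `par`). -/
def IsForest {V : Type*} (par : V → V) : Prop :=
  ∀ v : V, ∃ m : ℕ, par^[m + 1] v = par^[m] v

/-- The leaves: vertices with no children. -/
def leaves {V : Type*} (par : V → V) : Set V :=
  {v | ∀ u, par u = v → u = v}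

/-- A vertex has exactly one child. -/
def hasOneChild {V : Type*} (par : V → V) (v : V) : Prop :=
  ∃! u, u ≠ v ∧ par u = v

/-- Adjacency (parent/child relation) restricted to the subset `S`. -/
def adjOn {V : Type*} (par : V → V) (S : Set V) (u v : V) : Prop :=
  u ∈ S ∧ v ∈ S ∧ u ≠ v ∧ (par u = v ∨ par v = u)

/-- `longpaths par p`: vertices having exactly one child that lie in a connected
component of size at least `p` of the graph induced on the vertices having
exactly one child. -/
def longpaths {V : Type*} (par : V → V) (p : ℕ) : Set V :=
  {v | hasOneChild par v ∧
    p ≤ {u | Relation.ReflTransGen (adjOn par {w | hasOneChild par w}) v u}.ncard}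

lemma periodic_fixed {V : Type*} {par : V → V} (hf : IsForest par) (w : V) (d : ℕ)
    (hd : 1 ≤ d) (h : par^[d] w = w) : par w = w := by
  obtain ⟨m, hm⟩ := hf w
  have stab : ∀ s : ℕ, par^[m + s] w = par^[m] w := by
    intro s
    induction s with
    | zero => rfl
    | succ s ih =>
      have : m + (s + 1) = (m + s) + 1 := by omega
      rw [this, Function.iterate_succ_apply' par (m+s) w, ih,
        ← Function.iterate_succ_apply' par m w, hm]
  have mult : ∀ k : ℕ, par^[k * d] w = w := by
    intro k
    induction k with
    | zero => simp
    | succ k ih =>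
      have : (k + 1) * d = k * d + d := by ring
      rw [this, Function.iterate_add_apply, h, ih]
  have h1 : w = par^[m] w := by
    have h2 := mult m
    have hle : m ≤ m * d := Nat.le_mul_of_pos_right m hd
    have h3 : m * d = m + (m * d - m) := by omega
    rw [h3, stab] at h2
    exact h2.symm
  calc par w = par (par^[m] w) := by rw [← h1]
    _ = par^[m + 1] w := (Function.iterate_succ_apply' par m w).symm
    _ = par^[m] w := hm
    _ = w := h1.symm

open scoped Classical in
noncomputable def child {V : Type*} (par : V → V) (v : V) : V :=
  if h : hasOneChild par v then h.choose else v

lemma child_spec {V : Type*} {par : V → V} {v : V} (h : hasOneChild par v) :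
    child par v ≠ v ∧ par (child par v) = v := by
  classical
  simp only [child, dif_pos h]
  exact h.choose_spec.1

lemma chain_par {V : Type*} (par : V → V) (v : V) :
    ∀ j : ℕ, (∀ i < j, hasOneChild par ((child par)^[i] v)) →
      par^[j] ((child par)^[j] v) = v := by
  intro j
  induction j with
  | zero => simp
  | succ j ih =>
    intro h
    have h1 := h j (by omega)
    rw [Function.iterate_succ_apply' (child par), Function.iterate_succ_apply par,
      (child_spec h1).2]
    exact ih (fun i hi => h i (by omega))

lemma chain_inj {V : Type*} {par : V → V} (hf : IsForest par) (v : V) (J : ℕ)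
    (hS : ∀ t < J, hasOneChild par ((child par)^[t] v)) :
    ∀ i < J, ∀ j < J, (child par)^[i] v = (child par)^[j] v → i = j := by
  -- wlog via symmetric helper
  have key : ∀ i j, i < j → j < J → (child par)^[i] v ≠ (child par)^[j] v := by
    intro i j hij hjJ heq
    set w := (child par)^[i] v with hw
    set d := j - i with hd
    have hd1 : 1 ≤ d := by omega
    have hcd : (child par)^[d] w = w := by
      rw [hw, ← Function.iterate_add_apply]
      have : d + i = j := by omega
      rw [this, ← heq]
    have hchain : ∀ t < d, hasOneChild par ((child par)^[t] w) := by
      intro t ht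
      rw [hw, ← Function.iterate_add_apply]
      exact hS (t + i) (by omega)
    have hpd : par^[d] w = w := by
      have := chain_par par w d hchain
      rw [hcd] at this
      exact this
    have hroot : par w = w := periodic_fixed hf w d hd1 hpd
    have hu : hasOneChild par ((child par)^[d-1] w) := hchain (d-1) (by omega)
    have hcu : child par ((child par)^[d-1] w) = w := by
      have h2 : (child par)^[d-1+1] w = w := by
        have : d - 1 + 1 = d := by omega
        rw [this]; exact hcd
      rw [Function.iterate_succ_apply' (child par) (d-1) w] at h2
      exact h2
    have hpw := (child_spec hu).2
    rw [hcu] at hpw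
    have heqw : (child par)^[d-1] w = w := by rw [← hpw, hroot]
    exact (child_spec hu).1 (by rw [hcu, heqw])
  intro i hi j hj heq
  rcases lt_trichotomy i j with h | h | h
  · exact absurd heq (key i j h hj)
  · exact h
  · exact absurd heq.symm (key j i h hi)

lemma exists_exit {V : Type*} [Fintype V] {par : V → V} (hf : IsForest par) (v : V)
    (hv : hasOneChild par v) : ∃ k : ℕ, 1 ≤ k ∧ ¬ hasOneChild par ((child par)^[k] v) := by
  by_contra hcon
  push_neg at hcon
  have hall : ∀ t : ℕ, hasOneChild par ((child par)^[t] v) := by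
    intro t
    rcases Nat.eq_zero_or_pos t with h | h
    · rw [h]; exact hv
    · exact hcon t h
  obtain ⟨x, y, hxy, heq⟩ := Fintype.exists_ne_map_eq_of_card_lt
    (fun t : Fin (Fintype.card V + 1) => (child par)^[(t : ℕ)] v) (by simp)
  have := chain_inj hf v (Fintype.card V + 1) (fun t _ => hall t)
    x x.isLt y y.isLt heq
  exact hxy (Fin.ext this)

noncomputable def exitK {V : Type*} [Fintype V] (par : V → V) (hf : IsForest par) (v : V) : ℕ :=
  open scoped Classical in
  if h : hasOneChild par v then Nat.find (exists_exit hf v h) else 0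

lemma exitK_spec {V : Type*} [Fintype V] {par : V → V} (hf : IsForest par) {v : V}
    (h : hasOneChild par v) :
    1 ≤ exitK par hf v ∧ ¬ hasOneChild par ((child par)^[exitK par hf v] v) ∧
      ∀ t < exitK par hf v, hasOneChild par ((child par)^[t] v) := by
  classical
  have hK : exitK par hf v = Nat.find (exists_exit hf v h) := by
    simp only [exitK, dif_pos h]
  have hspec := Nat.find_spec (exists_exit hf v h)
  refine ⟨by rw [hK]; exact hspec.1, by rw [hK]; exact hspec.2, ?_⟩
  intro t ht
  rcases Nat.eq_zero_or_pos t with h0 | h0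
  · rw [h0]; exact h
  · have := Nat.find_min (exists_exit hf v h) (by rw [hK] at ht; exact ht)
    push_neg at this
    exact this h0

lemma chain_reflTrans {V : Type*} {par : V → V} (v : V) (K : ℕ)
    (hchain : ∀ t < K, hasOneChild par ((child par)^[t] v)) :
    ∀ t < K, Relation.ReflTransGen (adjOn par {w | hasOneChild par w}) v ((child par)^[t] v) := by
  intro t
  induction t with
  | zero => intro _; exact Relation.ReflTransGen.refl
  | succ t ih =>
    intro ht
    have ht' : t < K := by omega
    refine (ih ht').tail ?_
    have h1 := hchain t ht'
    have h2 := hchain (t+1) ht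
    have hcs := child_spec h1
    have hit : (child par)^[t+1] v = child par ((child par)^[t] v) :=
      Function.iterate_succ_apply' (child par) t v
    refine ⟨h1, h2, ?_, Or.inr ?_⟩
    · rw [hit]; exact (hcs.1).symm
    · rw [hit]; exact hcs.2

open scoped Classical in
lemma card_small_le {V : Type*} [Fintype V] {par : V → V} (hf : IsForest par) (p : ℕ) :
    (Finset.univ.filter (fun v => hasOneChild par v ∧ v ∉ longpaths par p)).card
      ≤ (Finset.univ.filter (fun v => ¬ hasOneChild par v)).card * (p - 1) := by
  classical
  set src := Finset.univ.filter (fun v => hasOneChild par v ∧ v ∉ longpaths par p) with hsrc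
  set tgt := (Finset.univ.filter (fun v => ¬ hasOneChild par v)) ×ˢ Finset.range (p-1) with htgt
  have hcard : tgt.card = (Finset.univ.filter (fun v => ¬ hasOneChild par v)).card * (p - 1) := by
    rw [htgt, Finset.card_product, Finset.card_range]
  rw [← hcard]
  apply Finset.card_le_card_of_injOn
    (fun v => ((child par)^[exitK par hf v] v, exitK par hf v - 1))
  · intro v hv
    rw [hsrc, Finset.mem_coe, Finset.mem_filter] at hv
    obtain ⟨-, hv1, hv2⟩ := hv
    obtain ⟨hK1, hKnot, hchain⟩ := exitK_spec hf hv1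
    -- bound exitK < p
    have hcomp : {u | Relation.ReflTransGen (adjOn par {w | hasOneChild par w}) v u}.ncard < p := by
      by_contra hcon
      push_neg at hcon
      exact hv2 ⟨hv1, hcon⟩
    set K := exitK par hf v
    have hKle : K ≤ {u | Relation.ReflTransGen (adjOn par {w | hasOneChild par w}) v u}.ncard := by
      set comp := {u | Relation.ReflTransGen (adjOn par {w | hasOneChild par w}) v u} with hcompdef
      set F := (Finset.range K).image (fun t => (child par)^[t] v) with hF
      have hFcard : F.card = K := by
        rw [hF, Finset.card_image_of_injOn, Finset.card_range]
        intro i hi j hj heq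
        simp only [Finset.coe_range, Set.mem_Iio] at hi hj
        exact chain_inj hf v K hchain i hi j hj heq
      have hsub : (↑F : Set V) ⊆ comp := by
        intro x hx
        simp only [hF, Finset.coe_image, Finset.coe_range, Set.mem_image, Set.mem_Iio] at hx
        obtain ⟨t, ht, rfl⟩ := hx
        exact chain_reflTrans v K hchain t ht
      calc K = F.card := hFcard.symm
        _ = (↑F : Set V).ncard := (Set.ncard_coe_finset F).symm
        _ ≤ comp.ncard := Set.ncard_le_ncard hsub (Set.toFinite comp)
    have hKp : K < p := lt_of_le_of_lt hKle hcomp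
    rw [htgt, Finset.mem_coe, Finset.mem_product]
    constructor
    · simp only [Finset.mem_filter, Finset.mem_univ, true_and]
      exact hKnot
    · simp only [Finset.mem_range]
      omega
  · intro v1 hv1 v2 hv2 heq
    rw [hsrc, Finset.coe_filter] at hv1 hv2
    obtain ⟨-, h1, -⟩ := hv1
    obtain ⟨-, h2, -⟩ := hv2
    obtain ⟨hK1, -, hchain1⟩ := exitK_spec hf h1
    obtain ⟨hK2, -, hchain2⟩ := exitK_spec hf h2
    have hKeq : exitK par hf v1 = exitK par hf v2 := by
      have := congrArg Prod.snd heq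
      simp only at this
      omega
    have hfst := congrArg Prod.fst heq
    simp only at hfst
    rw [hKeq] at hfst hchain1
    calc v1 = par^[exitK par hf v2] ((child par)^[exitK par hf v2] v1) :=
          (chain_par par v1 _ hchain1).symm
      _ = par^[exitK par hf v2] ((child par)^[exitK par hf v2] v2) := by rw [hfst]
      _ = v2 := chain_par par v2 _ hchain2

/-- in a finite rooted tree with `n ≥ 1` vertices, either the number
of leaves is at least `n / (6p)`, or `|longpaths(G, p)|` is at least `n / 3`. -/
theorem stmt0 {V : Type*} [Fintype V] (p : ℕ) (hp : 1 ≤ p)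
    (par : V → V) (hforest : IsForest par) (hroot : ∃! v : V, par v = v)
    (n : ℕ) (hn : n = Fintype.card V) (hn1 : 1 ≤ n) :
    (n : ℝ) / (6 * p) ≤ ((leaves par).ncard : ℝ) ∨
      (n : ℝ) / 3 ≤ ((longpaths par p).ncard : ℝ) := by
  classical
  set ch : V → Finset V := fun v => Finset.univ.filter (fun u => u ≠ v ∧ par u = v) with hch
  have hchmem : ∀ u v, u ∈ ch v ↔ (u ≠ v ∧ par u = v) := by
    intro u v; simp [hch]
  have hOne : ∀ v, hasOneChild par v ↔ (ch v).card = 1 := by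
    intro v
    rw [Finset.card_eq_one]
    constructor
    · rintro ⟨u, hu, huniq⟩
      refine ⟨u, Finset.eq_singleton_iff_unique_mem.mpr ⟨(hchmem u v).mpr hu, ?_⟩⟩
      intro x hx
      exact huniq x ((hchmem x v).mp hx)
    · rintro ⟨a, ha⟩
      have hmem := (hchmem a v).mp (by rw [ha]; exact Finset.mem_singleton_self a)
      refine ⟨a, hmem, ?_⟩
      intro y hy
      have : y ∈ ch v := (hchmem y v).mpr hy
      rwa [ha, Finset.mem_singleton] at this
  have hLeaf : ∀ v, v ∈ leaves par ↔ (ch v).card = 0 := by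
    intro v
    rw [Finset.card_eq_zero]
    constructor
    · intro h
      rw [Finset.eq_empty_iff_forall_notMem]
      intro u hu
      have := (hchmem u v).mp hu
      exact this.1 (h u this.2)
    · intro h u hu
      by_contra hne
      have : u ∈ ch v := (hchmem u v).mpr ⟨hne, hu⟩
      rw [h] at this
      exact absurd this (Finset.notMem_empty u)
  set Lf := Finset.univ.filter (fun v => (ch v).card = 0) with hLf
  set Sf := Finset.univ.filter (fun v => (ch v).card = 1) with hSf
  set Df := Finset.univ.filter (fun v => 2 ≤ (ch v).card) with hDf
  -- partition
  have hpart : n = Lf.card + Sf.card + Df.card := by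
    have hdisj12 : Disjoint Lf Sf := by
      rw [Finset.disjoint_left]
      intro a ha hb
      simp only [hLf, hSf, Finset.mem_filter, Finset.mem_univ, true_and] at ha hb
      omega
    have hdisj3 : Disjoint (Lf ∪ Sf) Df := by
      rw [Finset.disjoint_left]
      intro a ha hb
      simp only [hLf, hSf, hDf, Finset.mem_union, Finset.mem_filter, Finset.mem_univ,
        true_and] at ha hb
      omega
    have hU : Lf ∪ Sf ∪ Df = Finset.univ := by
      rw [Finset.eq_univ_iff_forall]
      intro v
      simp only [hLf, hSf, hDf, Finset.mem_union, Finset.mem_filter, Finset.mem_univ, true_and]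
      omega
    rw [hn, ← Finset.card_univ, ← hU, Finset.card_union_of_disjoint hdisj3,
      Finset.card_union_of_disjoint hdisj12]
  -- sum of children counts
  have hrootcard : (Finset.univ.filter (fun u => par u = u)).card = 1 := by
    rw [Finset.card_eq_one]
    obtain ⟨r, hr, hru⟩ := hroot
    refine ⟨r, ?_⟩
    rw [Finset.eq_singleton_iff_unique_mem]
    exact ⟨by simp [hr], fun x hx => hru x (by simpa using hx)⟩
  have hnonroot : (Finset.univ.filter (fun u => ¬ par u = u)).card = n - 1 := by
    have := Finset.card_filter_add_card_filter_not
      (s := Finset.univ) (p := fun u => par u = u)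
    rw [hrootcard, Finset.card_univ] at this
    rw [hn]
    omega
  have hsum : ∑ v, (ch v).card = n - 1 := by
    rw [← hnonroot]
    rw [Finset.card_eq_sum_card_fiberwise
      (f := par) (t := Finset.univ) (fun x _ => Finset.mem_univ (par x))]
    apply Finset.sum_congr rfl
    intro v _
    congr 1
    ext u
    simp only [hch, Finset.mem_filter, Finset.mem_univ, true_and]
    constructor
    · rintro ⟨h1, h2⟩; subst h2; exact ⟨fun h => h1 h.symm, rfl⟩
    · rintro ⟨h1, h2⟩; subst h2; exact ⟨fun h => h1 h.symm, rfl⟩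
  have hsumlow : Sf.card + 2 * Df.card ≤ n - 1 := by
    rw [← hsum]
    have hsub : Sf ∪ Df ⊆ Finset.univ := Finset.subset_univ _
    have hdisj : Disjoint Sf Df := by
      rw [Finset.disjoint_left]
      intro a ha hb
      simp only [hSf, hDf, Finset.mem_filter, Finset.mem_univ, true_and] at ha hb
      omega
    calc Sf.card + 2 * Df.card
        = ∑ v ∈ Sf, 1 + ∑ v ∈ Df, 2 := by
          rw [Finset.sum_const, Finset.sum_const, smul_eq_mul, smul_eq_mul]
          omega
      _ ≤ ∑ v ∈ Sf, (ch v).card + ∑ v ∈ Df, (ch v).card := by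
          apply Nat.add_le_add
          · apply Finset.sum_le_sum
            intro i hi
            simp only [hSf, Finset.mem_filter] at hi
            omega
          · apply Finset.sum_le_sum
            intro i hi
            simp only [hDf, Finset.mem_filter] at hi
            omega
      _ = ∑ v ∈ Sf ∪ Df, (ch v).card := (Finset.sum_union hdisj).symm
      _ ≤ ∑ v, (ch v).card := Finset.sum_le_sum_of_subset hsub
  -- identify finsets with the sets in the statement
  have hLcard : (leaves par).ncard = Lf.card := by
    have : leaves par = ↑Lf := by
      ext v
      simp only [hLf, Finset.coe_filter, Finset.mem_univ, true_and, Set.mem_setOf_eq]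
      exact hLeaf v
    rw [this, Set.ncard_coe_finset]
  set LPf := Finset.univ.filter (fun v => v ∈ longpaths par p) with hLPf
  have hLPcard : (longpaths par p).ncard = LPf.card := by
    have : longpaths par p = ↑LPf := by
      ext v
      simp only [hLPf, Finset.coe_filter, Finset.mem_univ, true_and, Set.mem_setOf_eq]
    rw [this, Set.ncard_coe_finset]
  -- Sf = one-child vertices; split into small + longpaths
  have hSfeq : Sf = Finset.univ.filter (fun v => hasOneChild par v) := by
    apply Finset.filter_congr
    intro v _
    exact (hOne v).symm
  have hnotS : (Finset.univ.filter (fun v => ¬ hasOneChild par v)).card = Lf.card + Df.card := by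
    have h2 := Finset.card_filter_add_card_filter_not
      (s := Finset.univ) (p := fun v => hasOneChild par v)
    rw [← hSfeq, Finset.card_univ, ← hn] at h2
    omega
  set Small := Finset.univ.filter (fun v => hasOneChild par v ∧ v ∉ longpaths par p) with hSmall
  have hsplit : Sf.card = Small.card + LPf.card := by
    have h2 := Finset.card_filter_add_card_filter_not
      (s := Sf) (p := fun v => v ∈ longpaths par p)
    have e1 : Sf.filter (fun v => v ∈ longpaths par p) = LPf := by
      rw [hSfeq, hLPf, Finset.filter_filter]
      apply Finset.filter_congr
      intro v _
      constructor
      · rintro ⟨-, h⟩; exact h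
      · intro h; exact ⟨h.1, h⟩
    have e2 : Sf.filter (fun v => v ∉ longpaths par p) = Small := by
      rw [hSfeq, hSmall, Finset.filter_filter]
    rw [e1, e2] at h2
    omega
  have hsmallle : Small.card ≤ (Lf.card + Df.card) * (p - 1) := by
    rw [← hnotS]
    exact card_small_le hforest p
  -- key numeric inequality : n ≤ 2 * p * Lf.card + LPf.card
  have hDL : Df.card + 1 ≤ Lf.card := by omega
  have hkey : n ≤ 2 * p * Lf.card + LPf.card := by
    have h1 : n = Lf.card + Df.card + Small.card + LPf.card := by omega
    have ha : (Lf.card + Df.card) * p = (Lf.card + Df.card) * (p - 1) + (Lf.card + Df.card) := by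
      have hpp : p = (p - 1) + 1 := by omega
      nth_rewrite 1 [hpp]
      ring
    have h3 : n ≤ (Lf.card + Df.card) * p + LPf.card := by
      linarith [hsmallle, ha, h1]
    have h2 : (Lf.card + Df.card) * p ≤ 2 * p * Lf.card := by
      have hle : Lf.card + Df.card ≤ 2 * Lf.card := by omega
      calc (Lf.card + Df.card) * p ≤ (2 * Lf.card) * p := Nat.mul_le_mul_right p hle
        _ = 2 * p * Lf.card := by ring
    linarith
  -- final real arithmetic
  by_contra hcon
  push_neg at hcon
  obtain ⟨hc1, hc2⟩ := hcon
  rw [hLcard] at hc1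
  rw [hLPcard] at hc2
  have hkeyR : (n : ℝ) ≤ 2 * p * Lf.card + LPf.card := by exact_mod_cast hkey
  have hpR : (1 : ℝ) ≤ p := by exact_mod_cast hp
  have hnR : (1 : ℝ) ≤ n := by exact_mod_cast hn1
  have hp0 : (0 : ℝ) < 6 * p := by linarith
  have h2p : (0 : ℝ) < 2 * p := by linarith
  have hA := mul_lt_mul_of_pos_left hc1 h2p
  have hB : 2 * (p : ℝ) * ((n : ℝ) / (6 * p)) = (n : ℝ) / 3 := by
    field_simp
    ring
  have hc2' : (LPf.card : ℝ) < (n : ℝ) / 3 := hc2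
  have : (n : ℝ) < (n : ℝ) / 3 + (n : ℝ) / 3 := by linarith
  linarith
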